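/- (Sklar's theorem, bivariate case with continuous marginals.) Let μ be a probability measure on ℝ × ℝ whose marginal distributions (the pushforwards under the two coordinate projections) have continuous cumulative distribution functions F₁ and F₂. Then there exists a unique probability measure ν on ℝ × ℝ that is concentrated on [0,1] × [0,1] and whose two marginals are both the uniform distribution on [0,1] (i.e., ν is a copula), such that for all x, y ∈ ℝ: μ((−∞, x] × (−∞, y]) = ν([0, F₁(x)] × [0, F₂(y)]). -/

import Mathlib

open MeasureTheory ProbabilityTheory

namespace SklarAux

open Set Filter


variable {m : Measure ℝ} [IsProbabilityMeasure m]

lemma cdf_setOf_le_eq (hF : Continuous (cdf m)) {u : ℝ} (hu0 : 0 ≤ u) (hu1 : u < 1) :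
    m {t | cdf m t ≤ u} = ENNReal.ofReal u := by
  set F := cdf m with hFdef
  set S := {t | F t ≤ u} with hS
  rcases S.eq_empty_or_nonempty with hemp | hne
  · have hu0' : u ≤ 0 := by
      refine ge_of_tendsto (tendsto_cdf_atBot (μ := m)) ?_
      filter_upwards with t
      by_contra h
      push_neg at h
      exact (eq_empty_iff_forall_notMem.mp hemp t) h.le
    have : u = 0 := le_antisymm hu0' hu0
    simp [hemp, this]
  · have hbdd : BddAbove S := by
      obtain ⟨b, hb⟩ := (((tendsto_cdf_atTop (μ := m)).eventually_const_lt hu1)).exists_forall_of_atTop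
      exact ⟨b, fun t ht => by
        by_contra hc
        push_neg at hc
        exact absurd (hb t hc.le) (not_lt.mpr ht)⟩
    have hScl : IsClosed S := isClosed_le hF continuous_const
    set s := sSup S with hsdef
    have hmem : s ∈ S := hScl.csSup_mem hne hbdd
    have hSIic : S = Iic s := by
      ext t
      constructor
      · exact fun ht => le_csSup hbdd ht
      · exact fun ht => le_trans (monotone_cdf m ht) hmem
    have hge : u ≤ F s := by
      refine ge_of_tendsto ((hF.tendsto s).mono_left (nhdsWithin_le_nhds (s := Ioi s))) ?_
      filter_upwards [self_mem_nhdsWithin] with t (ht : t ∈ Ioi s)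
      by_contra hc
      push_neg at hc
      exact absurd (le_csSup hbdd hc.le) (not_le.mpr ht)
    have hFs : F s = u := le_antisymm hmem hge
    rw [hSIic, ← ofReal_cdf m s, hFs]

lemma measure_setOf_cdf_le_cdf (hF : Continuous (cdf m)) (x : ℝ) :
    m {t | cdf m t ≤ cdf m x} = m (Iic x) := by
  rcases lt_or_ge (cdf m x) 1 with h | h
  · rw [cdf_setOf_le_eq hF (cdf_nonneg m x) h, ofReal_cdf m]
  · have hx1 : cdf m x = 1 := le_antisymm (cdf_le_one m x) h
    have huniv : {t | cdf m t ≤ cdf m x} = univ :=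
      eq_univ_of_forall fun t => by rw [hx1]; exact cdf_le_one m t
    rw [huniv, measure_univ, ← ofReal_cdf m x, hx1]
    norm_num

lemma map_cdf_eq (hF : Continuous (cdf m)) :
    m.map (cdf m) = volume.restrict (Icc 0 1) := by
  have hFm : Measurable (cdf m) := hF.measurable
  haveI : IsProbabilityMeasure (m.map (cdf m)) :=
    Measure.isProbabilityMeasure_map hFm.aemeasurable
  refine Measure.ext_of_Iic _ _ fun u => ?_
  rw [Measure.map_apply hFm measurableSet_Iic, Measure.restrict_apply measurableSet_Iic]
  rcases lt_or_ge u 0 with h | h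
  · have h1 : cdf m ⁻¹' Iic u = ∅ :=
      eq_empty_of_forall_notMem fun t ht =>
        absurd (le_trans (cdf_nonneg m t) ht) (not_le.mpr h)
    have h2 : Iic u ∩ Icc 0 1 = ∅ :=
      eq_empty_of_forall_notMem fun t ⟨ht1, ht2, _⟩ => absurd (le_trans ht2 ht1) (not_le.mpr h)
    rw [h1, h2]
    simp
  · rcases lt_or_ge u 1 with h1 | h1
    · have he : cdf m ⁻¹' Iic u = {t | cdf m t ≤ u} := rfl
      rw [he, cdf_setOf_le_eq hF h h1]
      have h2 : Iic u ∩ Icc 0 1 = Icc 0 u := by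
        ext t
        simp only [mem_inter_iff, mem_Iic, mem_Icc]
        exact ⟨fun ⟨ha, hb, _⟩ => ⟨hb, ha⟩, fun ⟨ha, hb⟩ => ⟨hb, ha, hb.trans h1.le⟩⟩
      rw [h2, Real.volume_Icc, sub_zero]
    · have he : cdf m ⁻¹' Iic u = univ :=
        eq_univ_of_forall fun t => (cdf_le_one m t).trans h1
      have h2 : Iic u ∩ Icc 0 1 = Icc 0 1 :=
        inter_eq_self_of_subset_right fun t ht => le_trans ht.2 h1
      rw [he, h2, measure_univ, Real.volume_Icc]
      norm_num

lemma exists_cdf_eq (hF : Continuous (cdf m)) {u : ℝ} (h0 : 0 < u) (h1 : u < 1) :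
    ∃ x, cdf m x = u := by
  obtain ⟨a, ha⟩ := ((tendsto_cdf_atBot (μ := m)).eventually_lt_const h0).exists
  obtain ⟨b, hb⟩ := ((tendsto_cdf_atTop (μ := m)).eventually_const_lt h1).exists
  exact intermediate_value_univ a b hF ⟨ha.le, hb.le⟩



lemma ext_prod_Iic (ρ ρ' : Measure (ℝ × ℝ)) [IsProbabilityMeasure ρ] [IsProbabilityMeasure ρ']
    (h : ∀ a b : ℝ, ρ (Iic a ×ˢ Iic b) = ρ' (Iic a ×ˢ Iic b)) : ρ = ρ' := by
  have hspan : IsCountablySpanning (range Iic : Set (Set ℝ)) := by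
    refine ⟨fun n => Iic (n : ℝ), fun n => mem_range_self _, ?_⟩
    ext x
    simp only [mem_iUnion, mem_Iic, mem_univ, iff_true]
    exact exists_nat_ge x
  have hCgen : MeasurableSpace.generateFrom (range (Iic : ℝ → Set ℝ)) = Real.measurableSpace := by
    rw [← borel_eq_generateFrom_Iic ℝ]
    exact (BorelSpace.measurable_eq (α := ℝ)).symm
  have hgen := generateFrom_eq_prod hCgen hCgen hspan hspan
  refine ext_of_generate_finite _ hgen.symm
    (isPiSystem_Iic.prod isPiSystem_Iic) ?_ (by simp)
  rintro _ ⟨s, ⟨a, rfl⟩, t, ⟨b, rfl⟩, rfl⟩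
  exact h a b

variable {ρ : Measure (ℝ × ℝ)}

lemma meas_le (hc : ρ ((Icc (0:ℝ) 1 ×ˢ Icc (0:ℝ) 1)ᶜ) = 0) {A B : Set (ℝ × ℝ)}
    (h : A ⊆ B ∪ (Icc (0:ℝ) 1 ×ˢ Icc (0:ℝ) 1)ᶜ) : ρ A ≤ ρ B :=
  calc ρ A ≤ ρ (B ∪ (Icc (0:ℝ) 1 ×ˢ Icc (0:ℝ) 1)ᶜ) := measure_mono h
    _ ≤ ρ B + ρ ((Icc (0:ℝ) 1 ×ˢ Icc (0:ℝ) 1)ᶜ) := measure_union_le _ _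
    _ = ρ B := by rw [hc, add_zero]

lemma zero_col (hm1 : ρ.map Prod.fst = volume.restrict (Icc 0 1)) (t : Set ℝ) :
    ρ (Icc (0:ℝ) 0 ×ˢ t) = 0 := by
  refine le_antisymm ?_ zero_le
  calc ρ (Icc (0:ℝ) 0 ×ˢ t) ≤ ρ (Prod.fst ⁻¹' {0}) := by
        rw [Icc_self]
        exact measure_mono fun p hp => hp.1
    _ = ρ.map Prod.fst {0} := (Measure.map_apply measurable_fst (measurableSet_singleton 0)).symm
    _ = 0 := by
        rw [hm1, Measure.restrict_apply (measurableSet_singleton 0)]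
        exact measure_mono_null inter_subset_left Real.volume_singleton

lemma zero_row (hm2 : ρ.map Prod.snd = volume.restrict (Icc 0 1)) (t : Set ℝ) :
    ρ (t ×ˢ Icc (0:ℝ) 0) = 0 := by
  refine le_antisymm ?_ zero_le
  calc ρ (t ×ˢ Icc (0:ℝ) 0) ≤ ρ (Prod.snd ⁻¹' {0}) := by
        rw [Icc_self]
        exact measure_mono fun p hp => hp.2
    _ = ρ.map Prod.snd {0} := (Measure.map_apply measurable_snd (measurableSet_singleton 0)).symm
    _ = 0 := by
        rw [hm2, Measure.restrict_apply (measurableSet_singleton 0)]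
        exact measure_mono_null inter_subset_left Real.volume_singleton

lemma one_col (hc : ρ ((Icc (0:ℝ) 1 ×ˢ Icc (0:ℝ) 1)ᶜ) = 0)
    (hm2 : ρ.map Prod.snd = volume.restrict (Icc 0 1)) {v : ℝ} (hv : v ∈ Icc (0:ℝ) 1) :
    ρ (Icc (0:ℝ) 1 ×ˢ Icc 0 v) = ENNReal.ofReal v := by
  have huniv : ρ ((univ : Set ℝ) ×ˢ Icc 0 v) = ENNReal.ofReal v := by
    rw [univ_prod, Measure.map_apply measurable_snd measurableSet_Icc |>.symm, hm2,
      Measure.restrict_apply measurableSet_Icc,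
      inter_eq_left.mpr (Icc_subset_Icc le_rfl hv.2), Real.volume_Icc, sub_zero]
  rw [← huniv]
  refine le_antisymm (measure_mono (prod_mono (subset_univ _) Subset.rfl)) ?_
  refine meas_le hc fun p hp => ?_
  by_cases h1 : p.1 ∈ Icc (0:ℝ) 1
  · exact Or.inl ⟨h1, hp.2⟩
  · exact Or.inr fun hsq => h1 hsq.1

lemma one_row (hc : ρ ((Icc (0:ℝ) 1 ×ˢ Icc (0:ℝ) 1)ᶜ) = 0)
    (hm1 : ρ.map Prod.fst = volume.restrict (Icc 0 1)) {u : ℝ} (hu : u ∈ Icc (0:ℝ) 1) :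
    ρ (Icc (0:ℝ) u ×ˢ Icc 0 1) = ENNReal.ofReal u := by
  have huniv : ρ (Icc (0:ℝ) u ×ˢ (univ : Set ℝ)) = ENNReal.ofReal u := by
    rw [prod_univ, Measure.map_apply measurable_fst measurableSet_Icc |>.symm, hm1,
      Measure.restrict_apply measurableSet_Icc,
      inter_eq_left.mpr (Icc_subset_Icc le_rfl hu.2), Real.volume_Icc, sub_zero]
  rw [← huniv]
  refine le_antisymm (measure_mono (prod_mono Subset.rfl (subset_univ _))) ?_
  refine meas_le hc fun p hp => ?_
  by_cases h2 : p.2 ∈ Icc (0:ℝ) 1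
  · exact Or.inl ⟨hp.1, h2⟩
  · exact Or.inr fun hsq => h2 hsq.2

lemma Iic_rect (hc : ρ ((Icc (0:ℝ) 1 ×ˢ Icc (0:ℝ) 1)ᶜ) = 0) {a b : ℝ} :
    ρ (Iic a ×ˢ Iic b) = ρ (Icc 0 (a ⊓ 1) ×ˢ Icc 0 (b ⊓ 1)) := by
  refine le_antisymm (meas_le hc fun p hp => ?_) (measure_mono (prod_mono ?_ ?_))
  · by_cases hsq : p ∈ Icc (0:ℝ) 1 ×ˢ Icc (0:ℝ) 1
    · exact Or.inl ⟨⟨hsq.1.1, le_inf hp.1 hsq.1.2⟩, ⟨hsq.2.1, le_inf hp.2 hsq.2.2⟩⟩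
    · exact Or.inr hsq
  · exact fun t ht => ht.2.trans inf_le_left
  · exact fun t ht => ht.2.trans inf_le_left

lemma neg_rect (hc : ρ ((Icc (0:ℝ) 1 ×ˢ Icc (0:ℝ) 1)ᶜ) = 0) {a b : ℝ} (h : a < 0 ∨ b < 0) :
    ρ (Iic a ×ˢ Iic b) = 0 := by
  refine measure_mono_null (fun p hp => ?_) hc
  intro hsq
  rcases h with h | h
  · exact absurd (lt_of_le_of_lt hp.1 h) (not_lt.mpr hsq.1.1)
  · exact absurd (lt_of_le_of_lt hp.2 h) (not_lt.mpr hsq.2.1)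



/-- Agreement of two copulas satisfying the Sklar identity, on `[0,u]×[0,v]`. -/
lemma rect_agree (μ : Measure (ℝ × ℝ)) [IsProbabilityMeasure μ]
    (hF₁ : Continuous (cdf (μ.map Prod.fst))) (hF₂ : Continuous (cdf (μ.map Prod.snd)))
    {ρ ν : Measure (ℝ × ℝ)}
    (hcρ : ρ ((Icc (0:ℝ) 1 ×ˢ Icc (0:ℝ) 1)ᶜ) = 0)
    (hρ1 : ρ.map Prod.fst = volume.restrict (Icc 0 1))
    (hρ2 : ρ.map Prod.snd = volume.restrict (Icc 0 1))
    (heqρ : ∀ x y : ℝ, μ (Iic x ×ˢ Iic y) =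
      ρ (Icc 0 (cdf (μ.map Prod.fst) x) ×ˢ Icc 0 (cdf (μ.map Prod.snd) y)))
    (hcν : ν ((Icc (0:ℝ) 1 ×ˢ Icc (0:ℝ) 1)ᶜ) = 0)
    (hν1 : ν.map Prod.fst = volume.restrict (Icc 0 1))
    (hν2 : ν.map Prod.snd = volume.restrict (Icc 0 1))
    (heqν : ∀ x y : ℝ, μ (Iic x ×ˢ Iic y) =
      ν (Icc 0 (cdf (μ.map Prod.fst) x) ×ˢ Icc 0 (cdf (μ.map Prod.snd) y)))
    {u v : ℝ} (hu : u ∈ Icc (0:ℝ) 1) (hv : v ∈ Icc (0:ℝ) 1) :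
    ρ (Icc 0 u ×ˢ Icc 0 v) = ν (Icc 0 u ×ˢ Icc 0 v) := by
  haveI : IsProbabilityMeasure (μ.map Prod.fst) :=
    Measure.isProbabilityMeasure_map measurable_fst.aemeasurable
  haveI : IsProbabilityMeasure (μ.map Prod.snd) :=
    Measure.isProbabilityMeasure_map measurable_snd.aemeasurable
  rcases eq_or_lt_of_le hu.1 with h0 | h0
  · rw [← h0, zero_col hρ1, zero_col hν1]
  rcases eq_or_lt_of_le hu.2 with h1 | h1
  · rw [h1, one_col hcρ hρ2 hv, one_col hcν hν2 hv]
  rcases eq_or_lt_of_le hv.1 with g0 | g0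
  · rw [← g0, zero_row hρ2, zero_row hν2]
  rcases eq_or_lt_of_le hv.2 with g1 | g1
  · rw [g1, one_row hcρ hρ1 hu, one_row hcν hν1 hu]
  obtain ⟨x, hx⟩ := exists_cdf_eq hF₁ h0 h1
  obtain ⟨y, hy⟩ := exists_cdf_eq hF₂ g0 g1
  rw [← hx, ← hy, ← heqρ x y, heqν x y]

end SklarAux

open Set Filter SklarAux


/-- Sklar's theorem (bivariate case, continuous marginals): there is a unique copula `ν`
(probability measure concentrated on the unit square, with uniform marginals on `[0,1]`)
such that `μ((−∞,x]×(−∞,y]) = ν([0,F₁(x)]×[0,F₂(y)])` for all `x, y`. -/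
theorem sklar_bivariate (μ : Measure (ℝ × ℝ)) [IsProbabilityMeasure μ]
    (hF₁ : Continuous (cdf (μ.map Prod.fst))) (hF₂ : Continuous (cdf (μ.map Prod.snd))) :
    ∃! ν : Measure (ℝ × ℝ),
      IsProbabilityMeasure ν ∧
      ν ((Set.Icc (0 : ℝ) 1 ×ˢ Set.Icc (0 : ℝ) 1)ᶜ) = 0 ∧
      ν.map Prod.fst = volume.restrict (Set.Icc (0 : ℝ) 1) ∧
      ν.map Prod.snd = volume.restrict (Set.Icc (0 : ℝ) 1) ∧
      ∀ x y : ℝ,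
        μ (Set.Iic x ×ˢ Set.Iic y) =
          ν (Set.Icc 0 (cdf (μ.map Prod.fst) x) ×ˢ Set.Icc 0 (cdf (μ.map Prod.snd) y)) := by
  
  haveI hm₁p : IsProbabilityMeasure (μ.map Prod.fst) :=
    Measure.isProbabilityMeasure_map measurable_fst.aemeasurable
  haveI hm₂p : IsProbabilityMeasure (μ.map Prod.snd) :=
    Measure.isProbabilityMeasure_map measurable_snd.aemeasurable
  set g : ℝ × ℝ → ℝ × ℝ :=
    fun p => (cdf (μ.map Prod.fst) p.1, cdf (μ.map Prod.snd) p.2) with hgdef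
  have hg : Measurable g :=
    ((hF₁.comp continuous_fst).prodMk (hF₂.comp continuous_snd)).measurable
  set ν : Measure (ℝ × ℝ) := μ.map g with hνdef
  haveI hνp : IsProbabilityMeasure ν := Measure.isProbabilityMeasure_map hg.aemeasurable
  have hsq : MeasurableSet (Icc (0:ℝ) 1 ×ˢ Icc (0:ℝ) 1) :=
    measurableSet_Icc.prod measurableSet_Icc
  have hν_conc : ν ((Icc (0:ℝ) 1 ×ˢ Icc (0:ℝ) 1)ᶜ) = 0 := by
    rw [hνdef, Measure.map_apply hg hsq.compl]
    have : g ⁻¹' (Icc (0:ℝ) 1 ×ˢ Icc (0:ℝ) 1)ᶜ = ∅ :=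
      eq_empty_of_forall_notMem fun p hp => hp
        ⟨⟨cdf_nonneg (μ.map Prod.fst) p.1, cdf_le_one (μ.map Prod.fst) p.1⟩,
         ⟨cdf_nonneg (μ.map Prod.snd) p.2, cdf_le_one (μ.map Prod.snd) p.2⟩⟩
    rw [this, measure_empty]
  have hν_fst : ν.map Prod.fst = volume.restrict (Icc (0:ℝ) 1) := by
    rw [hνdef, Measure.map_map measurable_fst hg]
    have : Prod.fst ∘ g = (cdf (μ.map Prod.fst)) ∘ Prod.fst := rfl
    rw [this, ← Measure.map_map hF₁.measurable measurable_fst]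
    exact map_cdf_eq hF₁
  have hν_snd : ν.map Prod.snd = volume.restrict (Icc (0:ℝ) 1) := by
    rw [hνdef, Measure.map_map measurable_snd hg]
    have : Prod.snd ∘ g = (cdf (μ.map Prod.snd)) ∘ Prod.snd := rfl
    rw [this, ← Measure.map_map hF₂.measurable measurable_snd]
    exact map_cdf_eq hF₂
  have hkey : ∀ x y : ℝ,
      μ (Iic x ×ˢ Iic y) =
        ν (Icc 0 (cdf (μ.map Prod.fst) x) ×ˢ Icc 0 (cdf (μ.map Prod.snd) y)) := by
    intro x y
    rw [hνdef, Measure.map_apply hg (measurableSet_Icc.prod measurableSet_Icc)]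
    have hpre : g ⁻¹' (Icc 0 (cdf (μ.map Prod.fst) x) ×ˢ Icc 0 (cdf (μ.map Prod.snd) y)) =
        {t | cdf (μ.map Prod.fst) t ≤ cdf (μ.map Prod.fst) x} ×ˢ
        {t | cdf (μ.map Prod.snd) t ≤ cdf (μ.map Prod.snd) y} := by
      ext p
      simp only [mem_preimage, mem_prod, mem_Icc, mem_setOf_eq, hgdef]
      exact ⟨fun h => ⟨h.1.2, h.2.2⟩,
        fun h => ⟨⟨cdf_nonneg (μ.map Prod.fst) p.1, h.1⟩,
          ⟨cdf_nonneg (μ.map Prod.snd) p.2, h.2⟩⟩⟩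
    rw [hpre]
    set Sx := {t | cdf (μ.map Prod.fst) t ≤ cdf (μ.map Prod.fst) x} with hSx
    set Sy := {t | cdf (μ.map Prod.snd) t ≤ cdf (μ.map Prod.snd) y} with hSy
    have hxsub : Iic x ⊆ Sx := fun t ht => monotone_cdf (μ.map Prod.fst) ht
    have hysub : Iic y ⊆ Sy := fun t ht => monotone_cdf (μ.map Prod.snd) ht
    refine le_antisymm (measure_mono (prod_mono hxsub hysub)) ?_
    have h1 : μ (Prod.fst ⁻¹' (Sx \ Iic x)) = 0 := by
      rw [← Measure.map_apply measurable_fst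
        (((isClosed_le hF₁ continuous_const).measurableSet).diff measurableSet_Iic)]
      rw [measure_diff hxsub measurableSet_Iic.nullMeasurableSet (measure_ne_top _ _),
        measure_setOf_cdf_le_cdf hF₁ x, tsub_self]
    have h2 : μ (Prod.snd ⁻¹' (Sy \ Iic y)) = 0 := by
      rw [← Measure.map_apply measurable_snd
        (((isClosed_le hF₂ continuous_const).measurableSet).diff measurableSet_Iic)]
      rw [measure_diff hysub measurableSet_Iic.nullMeasurableSet (measure_ne_top _ _),
        measure_setOf_cdf_le_cdf hF₂ y, tsub_self]
    have hsub : Sx ×ˢ Sy ⊆ (Iic x ×ˢ Iic y) ∪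
        (Prod.fst ⁻¹' (Sx \ Iic x) ∪ Prod.snd ⁻¹' (Sy \ Iic y)) := by
      intro p hp
      by_cases hx : p.1 ≤ x
      · by_cases hy : p.2 ≤ y
        · exact Or.inl ⟨hx, hy⟩
        · exact Or.inr (Or.inr ⟨hp.2, hy⟩)
      · exact Or.inr (Or.inl ⟨hp.1, hx⟩)
    calc μ (Sx ×ˢ Sy) ≤ μ ((Iic x ×ˢ Iic y) ∪
          (Prod.fst ⁻¹' (Sx \ Iic x) ∪ Prod.snd ⁻¹' (Sy \ Iic y))) := measure_mono hsub
      _ ≤ μ (Iic x ×ˢ Iic y) +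
          μ (Prod.fst ⁻¹' (Sx \ Iic x) ∪ Prod.snd ⁻¹' (Sy \ Iic y)) := measure_union_le _ _
      _ ≤ μ (Iic x ×ˢ Iic y) +
          (μ (Prod.fst ⁻¹' (Sx \ Iic x)) + μ (Prod.snd ⁻¹' (Sy \ Iic y))) :=
            add_le_add_right (measure_union_le _ _) _
      _ = μ (Iic x ×ˢ Iic y) := by rw [h1, h2, add_zero, add_zero]
  refine ⟨ν, ⟨hνp, hν_conc, hν_fst, hν_snd, hkey⟩, ?_⟩
  rintro ρ ⟨hρp, hcρ, hρ1, hρ2, heqρ⟩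
  haveI := hρp
  refine ext_prod_Iic ρ ν fun a b => ?_
  rcases lt_or_ge a 0 with ha | ha
  · rw [neg_rect hcρ (Or.inl ha), neg_rect hν_conc (Or.inl ha)]
  rcases lt_or_ge b 0 with hb | hb
  · rw [neg_rect hcρ (Or.inr hb), neg_rect hν_conc (Or.inr hb)]
  rw [Iic_rect hcρ, Iic_rect hν_conc]
  exact rect_agree μ hF₁ hF₂ hcρ hρ1 hρ2 heqρ hν_conc hν_fst hν_snd hkey
    ⟨le_inf ha zero_le_one, inf_le_right⟩ ⟨le_inf hb zero_le_one, inf_le_right⟩
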